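/- arXiv:2501.14962 — 2 statements merged into one kernel-verified Lean document; each statement's English description precedes it below -/
import Mathlib

section
/- Let {ℓ_n} be a decreasing sequence in (0,1), {ω_n} i.i.d. uniform on 𝕋, and A ⊂ 𝕋 a set whose ε-covering numbers satisfy N(ε, A) ≤ ε^{−β} for all small ε > 0. If for some d ∈ (0,1) the series Σ_{n=1}^∞ (1/ℓ_n)^β exp(−n d ℓ_n) converges, then with probability one A ⊂ U(ω), where U(ω) = liminf_{n→∞} ∪_{k=1}^n B(ω_k, ℓ_n/2). -/
open MeasureTheory Filter ProbabilityTheory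
open scoped ENNReal

noncomputable def coveringNumber (ε : ℝ) (A : Set UnitAddCircle) : ℕ :=
  sInf {m : ℕ | ∃ s : Finset UnitAddCircle, s.card = m ∧ A ⊆ ⋃ x ∈ s, Metric.ball x ε}

lemma exists_net (ε : ℝ) (hε : 0 < ε) (A : Set UnitAddCircle) :
    ∃ s : Finset UnitAddCircle, s.card = coveringNumber ε A ∧
      A ⊆ ⋃ x ∈ s, Metric.ball x ε := by
  have hne : {m : ℕ | ∃ s : Finset UnitAddCircle, s.card = m ∧
      A ⊆ ⋃ x ∈ s, Metric.ball x ε}.Nonempty := by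
    obtain ⟨t, htf, htc⟩ := Metric.totallyBounded_iff.mp
      (isCompact_univ (X := UnitAddCircle)).totallyBounded ε hε
    refine ⟨htf.toFinset.card, htf.toFinset, rfl, fun y _ => ?_⟩
    have := htc (Set.mem_univ y)
    simpa [Set.Finite.mem_toFinset] using this
  exact Nat.sInf_mem hne

lemma vol_ball (c : UnitAddCircle) (r : ℝ) :
    volume (Metric.ball c r) = ENNReal.ofReal (min 1 (2 * r)) := by
  rw [← measure_congr (AddCircle.closedBall_ae_eq_ball (x := c) (ε := r)),
    AddCircle.volume_closedBall]

/-- Theorem 1-2): if `N(ε, A) ≤ ε^{-β}` for small `ε` and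
`∑ (1/ℓ n)^β exp(-n d ℓ n) < ∞` for some `d ∈ (0,1)`, then almost surely
`A ⊆ U(ω) = liminf_n ⋃_{k ≤ n} B(ω k, ℓ n / 2)`. -/
theorem stmt4 {Ω : Type*} [MeasureSpace Ω] [IsProbabilityMeasure (ℙ : Measure Ω)]
    (ℓ : ℕ → ℝ) (hdec : Antitone ℓ) (hℓ : ∀ n, ℓ n ∈ Set.Ioo (0 : ℝ) 1)
    (ω : ℕ → Ω → UnitAddCircle) (hmeas : ∀ k, Measurable (ω k))
    (hunif : ∀ k, Measure.map (ω k) ℙ = volume)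
    (hindep : iIndepFun ω ℙ)
    (A : Set UnitAddCircle) (β : ℝ) (hβ : 0 ≤ β)
    (hcov : ∃ ε₀ > 0, ∀ ε ∈ Set.Ioo (0 : ℝ) ε₀, (coveringNumber ε A : ℝ) ≤ ε ^ (-β))
    (d : ℝ) (hd : d ∈ Set.Ioo (0 : ℝ) 1)
    (hsum : Summable fun n : ℕ => (1 / ℓ n) ^ β * Real.exp (-(n : ℝ) * d * ℓ n)) :
    ∀ᵐ x : Ω, ∀ y ∈ A, ∀ᶠ n in atTop,
      ∃ k ∈ Finset.range n, y ∈ Metric.ball (ω k x) (ℓ n / 2) := by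
  obtain ⟨ε₀, hε₀, hcov⟩ := hcov
  obtain ⟨hd0, hd1⟩ := hd
  have hℓ0 : ∀ n, 0 < ℓ n := fun n => (hℓ n).1
  have hℓ1 : ∀ n, ℓ n < 1 := fun n => (hℓ n).2
  -- radii
  set E : ℕ → ℝ := fun n => min ((1 - d) * ℓ n / 2) (ε₀ / 2) with hE
  have hEpos : ∀ n, 0 < E n := fun n =>
    lt_min (by have := hℓ0 n; nlinarith) (by linarith)
  have hEmem : ∀ n, E n ∈ Set.Ioo (0 : ℝ) ε₀ := fun n =>
    ⟨hEpos n, lt_of_le_of_lt (min_le_right _ _) (by linarith)⟩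
  set c : ℝ := min ((1 - d) / 2) (ε₀ / 2) with hc
  have hc0 : 0 < c := lt_min (by linarith) (by linarith)
  have hcE : ∀ n, c * ℓ n ≤ E n := by
    intro n
    refine le_min ?_ ?_
    · calc c * ℓ n ≤ (1 - d) / 2 * ℓ n :=
        mul_le_mul_of_nonneg_right (min_le_left _ _) (hℓ0 n).le
      _ = (1 - d) * ℓ n / 2 := by ring
    · calc c * ℓ n ≤ ε₀ / 2 * ℓ n :=
        mul_le_mul_of_nonneg_right (min_le_right _ _) (hℓ0 n).le
      _ ≤ ε₀ / 2 * 1 := by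
          have := (hℓ1 n).le; nlinarith
      _ = ε₀ / 2 := by ring
  -- nets
  choose net hnetcard hnetcov using fun n => exists_net (E n) (hEpos n) A
  -- card bound
  have hcard : ∀ n, ((net n).card : ℝ) ≤ c ^ (-β) * (1 / ℓ n) ^ β := by
    intro n
    rw [hnetcard n]
    calc (coveringNumber (E n) A : ℝ) ≤ (E n) ^ (-β) := hcov _ (hEmem n)
      _ ≤ (c * ℓ n) ^ (-β) :=
          Real.rpow_le_rpow_of_nonpos (mul_pos hc0 (hℓ0 n)) (hcE n) (neg_nonpos.mpr hβ)
      _ = c ^ (-β) * (ℓ n) ^ (-β) :=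
          Real.mul_rpow hc0.le (hℓ0 n).le
      _ = c ^ (-β) * (1 / ℓ n) ^ β := by
          rw [one_div, Real.inv_rpow (hℓ0 n).le, ← Real.rpow_neg (hℓ0 n).le]
  -- bad events
  set r : ℕ → ℝ := fun n => d * ℓ n / 2 with hr
  set bad : ℕ → Set Ω := fun n =>
    ⋃ p ∈ net n, ⋂ k ∈ Finset.range n, (ω k) ⁻¹' (Metric.ball p (r n))ᶜ with hbad
  -- single miss probability
  have hmiss : ∀ (k n : ℕ) (p : UnitAddCircle),
      ℙ ((ω k) ⁻¹' (Metric.ball p (r n))ᶜ) = ENNReal.ofReal (1 - d * ℓ n) := by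
    intro k n p
    have hb : ℙ ((ω k) ⁻¹' (Metric.ball p (r n))) = ENNReal.ofReal (d * ℓ n) := by
      have hmap := Measure.map_apply (μ := ℙ) (hmeas k)
        (Metric.isOpen_ball (x := p) (ε := r n)).measurableSet
      rw [hunif k] at hmap
      rw [← hmap, vol_ball]
      congr 1
      rw [min_eq_right]
      · show 2 * (d * ℓ n / 2) = d * ℓ n; ring
      · have := hℓ1 n; have := hℓ0 n; show 2 * (d * ℓ n / 2) ≤ 1; nlinarith
    rw [Set.preimage_compl, prob_compl_eq_one_sub
      ((hmeas k) Metric.isOpen_ball.measurableSet), hb,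
      ← ENNReal.ofReal_one, ← ENNReal.ofReal_sub _ (by have := hℓ0 n; positivity)]
  -- intersection probability via independence
  have hiInter : ∀ (n : ℕ) (p : UnitAddCircle),
      ℙ (⋂ k ∈ Finset.range n, (ω k) ⁻¹' (Metric.ball p (r n))ᶜ)
        = ENNReal.ofReal (1 - d * ℓ n) ^ n := by
    intro n p
    rw [hindep.meas_biInter (S := Finset.range n)
      (s := fun k => (ω k) ⁻¹' (Metric.ball p (r n))ᶜ)
      (fun k _ => ⟨(Metric.ball p (r n))ᶜ, Metric.isOpen_ball.measurableSet.compl, rfl⟩)]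
    rw [Finset.prod_congr rfl (fun k _ => hmiss k n p), Finset.prod_const,
      Finset.card_range]
  -- bound on bad event
  have hbadle : ∀ n, ℙ (bad n) ≤
      ENNReal.ofReal (c ^ (-β) * ((1 / ℓ n) ^ β * Real.exp (-(n : ℝ) * d * ℓ n))) := by
    intro n
    have h1 : ℙ (bad n) ≤ ((net n).card : ℝ≥0∞) * ENNReal.ofReal (1 - d * ℓ n) ^ n := by
      calc ℙ (bad n) ≤ ∑ p ∈ net n, ℙ (⋂ k ∈ Finset.range n, (ω k) ⁻¹' (Metric.ball p (r n))ᶜ) :=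
            measure_biUnion_finset_le _ _
        _ = ∑ _p ∈ net n, ENNReal.ofReal (1 - d * ℓ n) ^ n := by
            exact Finset.sum_congr rfl fun p _ => hiInter n p
        _ = ((net n).card : ℝ≥0∞) * ENNReal.ofReal (1 - d * ℓ n) ^ n := by
            rw [Finset.sum_const, nsmul_eq_mul]
    have h2 : ENNReal.ofReal (1 - d * ℓ n) ^ n ≤ ENNReal.ofReal (Real.exp (-(n : ℝ) * d * ℓ n)) := by
      have hle : (1 - d * ℓ n) ^ n ≤ Real.exp (-(n : ℝ) * d * ℓ n) := by
        have h1dl : (0:ℝ) ≤ 1 - d * ℓ n := by have := hℓ1 n; have := hℓ0 n; nlinarith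
        calc (1 - d * ℓ n) ^ n ≤ Real.exp (-(d * ℓ n)) ^ n := by
              apply pow_le_pow_left₀ h1dl
              have := Real.add_one_le_exp (-(d * ℓ n)); linarith
          _ = Real.exp ((n : ℝ) * (-(d * ℓ n))) := (Real.exp_nat_mul _ n).symm
          _ = Real.exp (-(n : ℝ) * d * ℓ n) := by ring_nf
      calc ENNReal.ofReal (1 - d * ℓ n) ^ n
          = ENNReal.ofReal ((1 - d * ℓ n) ^ n) := by
            rw [ENNReal.ofReal_pow (by have := hℓ1 n; have := hℓ0 n; nlinarith)]
        _ ≤ ENNReal.ofReal (Real.exp (-(n : ℝ) * d * ℓ n)) := ENNReal.ofReal_le_ofReal hle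
    calc ℙ (bad n) ≤ ((net n).card : ℝ≥0∞) * ENNReal.ofReal (1 - d * ℓ n) ^ n := h1
      _ ≤ ENNReal.ofReal (c ^ (-β) * (1 / ℓ n) ^ β) *
            ENNReal.ofReal (Real.exp (-(n : ℝ) * d * ℓ n)) := by
          apply mul_le_mul'
          · rw [show ((net n).card : ℝ≥0∞) = ENNReal.ofReal ((net n).card : ℝ) from
              (ENNReal.ofReal_natCast _).symm]
            exact ENNReal.ofReal_le_ofReal (hcard n)
          · exact h2
      _ = ENNReal.ofReal (c ^ (-β) * ((1 / ℓ n) ^ β * Real.exp (-(n : ℝ) * d * ℓ n))) := by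
          rw [← ENNReal.ofReal_mul (mul_nonneg (Real.rpow_nonneg hc0.le _)
            (Real.rpow_nonneg (by have := hℓ0 n; positivity) _)), mul_assoc]
  -- summability
  have hsum' : (∑' n, ℙ (bad n)) ≠ ⊤ := by
    have hS : Summable fun n : ℕ =>
        c ^ (-β) * ((1 / ℓ n) ^ β * Real.exp (-(n : ℝ) * d * ℓ n)) := hsum.mul_left _
    have hnn : ∀ n : ℕ, 0 ≤ c ^ (-β) * ((1 / ℓ n) ^ β * Real.exp (-(n : ℝ) * d * ℓ n)) :=
      fun n => mul_nonneg (Real.rpow_nonneg hc0.le _)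
        (mul_nonneg (Real.rpow_nonneg (by have := hℓ0 n; positivity) _) (Real.exp_nonneg _))
    have hle : (∑' n, ℙ (bad n)) ≤
        ENNReal.ofReal (∑' n, c ^ (-β) * ((1 / ℓ n) ^ β * Real.exp (-(n : ℝ) * d * ℓ n))) := by
      calc (∑' n, ℙ (bad n))
          ≤ ∑' n, ENNReal.ofReal (c ^ (-β) * ((1 / ℓ n) ^ β * Real.exp (-(n : ℝ) * d * ℓ n))) :=
            ENNReal.tsum_le_tsum hbadle
        _ = ENNReal.ofReal (∑' n, c ^ (-β) * ((1 / ℓ n) ^ β * Real.exp (-(n : ℝ) * d * ℓ n))) :=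
            (ENNReal.ofReal_tsum_of_nonneg hnn hS).symm
    exact ne_top_of_le_ne_top ENNReal.ofReal_ne_top hle
  -- Borel–Cantelli
  filter_upwards [ae_eventually_notMem hsum'] with x hx
  intro y hy
  filter_upwards [hx] with n hn
  obtain ⟨p, hp, hyp⟩ := Set.mem_iUnion₂.mp (hnetcov n hy)
  have hn' : ∃ k ∈ Finset.range n, ω k x ∈ Metric.ball p (r n) := by
    by_contra hcon
    push_neg at hcon
    exact hn (Set.mem_iUnion₂.mpr ⟨p, hp, Set.mem_iInter₂.mpr fun k hk => hcon k hk⟩)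
  obtain ⟨k, hk, hkx⟩ := hn'
  refine ⟨k, hk, ?_⟩
  rw [Metric.mem_ball] at *
  calc dist y (ω k x) ≤ dist y p + dist p (ω k x) := dist_triangle _ _ _
    _ < E n + r n := by
        rw [dist_comm p]
        exact add_lt_add hyp hkx
    _ ≤ (1 - d) * ℓ n / 2 + d * ℓ n / 2 := add_le_add (min_le_left _ _) le_rfl
    _ = ℓ n / 2 := by ring
end

section
/- Let δ ∈ [0,1) and let {ℓ_n} be a decreasing sequence in (0,1) with liminf_{n→∞} (n ℓ_n / ln n) = δ. Then there exists a strictly increasing sequence of integers {n_k} such that the sequence L' defined by ℓ'_s = ℓ_{n_{k+1}} for n_k < s ≤ n_{k+1} satisfies limsup_{N→∞} (Σ_{s=1}^N ℓ'_s)/ln N ≤ δ. -/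
open Filter

lemma concave_aux (δ' A c a b x : ℝ) (ha : 0 < a) (hab : a < b) (hx1 : a ≤ x) (hx2 : x ≤ b)
    (hδ' : 0 ≤ δ')
    (h1 : A ≤ δ' * Real.log a) (h2 : A + (b - a) * c ≤ δ' * Real.log b) :
    A + (x - a) * c ≤ δ' * Real.log x := by
  set t : ℝ := (x - a) / (b - a) with htdef
  have hba : (0:ℝ) < b - a := by linarith
  have ht0 : 0 ≤ t := div_nonneg (by linarith) hba.le
  have ht1 : t ≤ 1 := (div_le_one hba).2 (by linarith)
  have hxt : (1 - t) * a + t * b = x := by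
    rw [htdef]; linear_combination div_mul_cancel₀ (x - a) hba.ne'
  have hconc := strictConcaveOn_log_Ioi.concaveOn.2 (Set.mem_Ioi.2 ha)
    (Set.mem_Ioi.2 (ha.trans hab)) (by linarith : (0:ℝ) ≤ 1 - t) ht0 (by ring)
  rw [smul_eq_mul, smul_eq_mul, smul_eq_mul, smul_eq_mul, hxt] at hconc
  have htx : t * (b - a) = x - a := by rw [htdef]; exact div_mul_cancel₀ (x - a) hba.ne'
  calc A + (x - a) * c = (1 - t) * A + t * (A + (b - a) * c) := by rw [← htx]; ring
    _ ≤ (1 - t) * (δ' * Real.log a) + t * (δ' * Real.log b) := by gcongr <;> linarith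
    _ = δ' * ((1 - t) * Real.log a + t * Real.log b) := by ring
    _ ≤ δ' * Real.log x := mul_le_mul_of_nonneg_left hconc hδ'

/-- Lemma on `D(L') ≤ δ`: if `liminf n ℓ n / ln n = δ ∈ [0,1)`, there is a strictly increasing
sequence of integers `n k` such that the block-constant sequence `ℓ' s = ℓ (n (k+1))` for
`n k < s ≤ n (k+1)` satisfies `limsup (∑_{s ≤ N} ℓ' s) / ln N ≤ δ`. -/
theorem stmt5 (δ : ℝ) (hδ : δ ∈ Set.Ico (0 : ℝ) 1)
    (ℓ : ℕ → ℝ) (hdec : Antitone ℓ) (hℓ : ∀ m, ℓ m ∈ Set.Ioo (0 : ℝ) 1)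
    (hliminf : liminf (fun m : ℕ => (m : ℝ) * ℓ m / Real.log m) atTop = δ) :
    ∃ n : ℕ → ℕ, StrictMono n ∧ ∃ ℓ' : ℕ → ℝ,
      (∀ k s, n k < s → s ≤ n (k + 1) → ℓ' s = ℓ (n (k + 1))) ∧
      limsup (fun N : ℕ => (∑ s ∈ Finset.Icc 1 N, ℓ' s) / Real.log N) atTop ≤ δ := by
  classical
  obtain ⟨hδ0, hδ1⟩ := hδ
  set u : ℕ → ℝ := fun m => (m : ℝ) * ℓ m / Real.log m with hu
  by_cases hcob : IsCoboundedUnder (· ≥ ·) atTop u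
  case neg =>
    -- degenerate case: u tends to atTop, limsup is junk value 0
    have hten : ∀ C : ℝ, ∀ᶠ m : ℕ in atTop, C ≤ u m := by
      intro C
      by_contra hC
      rw [not_eventually] at hC
      apply hcob
      refine ⟨C, fun a ha => ?_⟩
      rw [eventually_map] at ha
      obtain ⟨m, hm1, hm2⟩ := (ha.and_frequently hC).exists
      push_neg at hm2
      exact (le_of_lt (lt_of_le_of_lt hm1 hm2))
    set n : ℕ → ℕ := fun k => k + 1 with hn
    have hmono : StrictMono n := fun a b h => by simp [hn]; omega
    set ℓ' : ℕ → ℝ := fun s =>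
      if h : ∃ k, n k < s ∧ s ≤ n (k+1) then ℓ (n (h.choose + 1)) else 0 with hℓ'def
    have hℓ'eq : ∀ k s, n k < s → s ≤ n (k + 1) → ℓ' s = ℓ (n (k + 1)) := by
      intro k s h1 h2
      have h : ∃ k, n k < s ∧ s ≤ n (k+1) := ⟨k, h1, h2⟩
      have hk : h.choose = k := by
        have h1' := h.choose_spec.1
        have h2' := h.choose_spec.2
        simp only [hn] at h1' h2' h1 h2 ⊢
        omega
      rw [hℓ'def]
      simp only [dif_pos h, hk]
    refine ⟨n, hmono, ℓ', hℓ'eq, ?_⟩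
    -- ℓ' s = ℓ s for s ≥ 2
    have hℓ's : ∀ s, 2 ≤ s → ℓ' s = ℓ s := by
      intro s hs
      have := hℓ'eq (s - 2) s (by simp [hn]; omega) (by simp [hn]; omega)
      simpa [hn, Nat.sub_add_cancel (by omega : 2 ≤ s)] using this
    set F : ℕ → ℝ := fun N => (∑ s ∈ Finset.Icc 1 N, ℓ' s) / Real.log N with hF
    have hFbig : ∀ C : ℝ, ∀ᶠ N : ℕ in atTop, C ≤ F N := by
      intro C
      filter_upwards [hten (2 * C), eventually_ge_atTop 4] with N h1 h2
      have hlogpos : (0:ℝ) < Real.log N := Real.log_pos (by exact_mod_cast (by omega : 1 < N))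
      have hsum : ((N:ℝ) - 1) * ℓ N ≤ ∑ s ∈ Finset.Icc 1 N, ℓ' s := by
        have : ∑ s ∈ Finset.Icc 2 N, ℓ N ≤ ∑ s ∈ Finset.Icc 2 N, ℓ' s := by
          apply Finset.sum_le_sum
          intro s hs
          simp only [Finset.mem_Icc] at hs
          rw [hℓ's s hs.1]
          exact hdec hs.2
        have hcard : ∑ s ∈ Finset.Icc 2 N, ℓ N = ((N:ℝ) - 1) * ℓ N := by
          rw [Finset.sum_const, Nat.card_Icc]
          have : (N + 1 - 2 : ℕ) = N - 1 := by omega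
          rw [this, nsmul_eq_mul, Nat.cast_sub (by omega)]
          norm_num
        have hsub : ∑ s ∈ Finset.Icc 2 N, ℓ' s ≤ ∑ s ∈ Finset.Icc 1 N, ℓ' s := by
          apply Finset.sum_le_sum_of_subset_of_nonneg
          · intro x hx; simp only [Finset.mem_Icc] at *; omega
          · intro i _ _
            by_cases hi : ∃ k, n k < i ∧ i ≤ n (k+1)
            · simp only [hℓ'def, dif_pos hi]; exact (hℓ _).1.le
            · simp only [hℓ'def, dif_neg hi]; exact le_refl 0
        linarith [hcard ▸ this]
      rw [hF, le_div_iff₀ hlogpos]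
      have hN2 : ((N:ℝ) - 1) ≥ (N:ℝ)/2 := by
        have : (4:ℝ) ≤ N := by exact_mod_cast h2
        linarith
      have hu' : 2 * C * Real.log N ≤ (N:ℝ) * ℓ N := by
        rw [hu] at h1
        have := (le_div_iff₀ hlogpos).1 h1
        linarith
      have hℓpos : 0 ≤ ℓ N := (hℓ N).1.le
      nlinarith [hsum]
    have hempty : {a : ℝ | ∀ᶠ N : ℕ in atTop, F N ≤ a} = ∅ := by
      ext a
      simp only [Set.mem_setOf_eq, Set.mem_empty_iff_false, iff_false]
      intro ha
      have := (ha.and (hFbig (a+1))).exists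
      obtain ⟨N, h1, h2⟩ := this
      linarith
    have : limsup F atTop = sInf {a : ℝ | ∀ᶠ N : ℕ in atTop, F N ≤ a} := limsup_eq
    rw [this, hempty, Real.sInf_empty]
    exact hδ0
  case pos =>
    have hfreq : ∀ ε : ℝ, 0 < ε → ∃ᶠ m : ℕ in atTop, u m < δ + ε := by
      intro ε hε
      exact frequently_lt_of_liminf_lt hcob (by rw [hliminf]; linarith)
    -- Step 2: selection
    have key : ∀ (k M : ℕ), ∃ m : ℕ, M < m ∧ 3 ≤ m ∧
        (M:ℝ) ≤ (1/(k+2)) * Real.log m ∧ (m:ℝ) * ℓ m ≤ (δ + 1/((k:ℝ)+2)) * Real.log m := by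
      intro k M
      have hε : (0:ℝ) < 1/((k:ℝ)+2) := by positivity
      have hev : ∀ᶠ m : ℕ in atTop, M < m ∧ 3 ≤ m ∧ (M:ℝ) ≤ (1/((k:ℝ)+2)) * Real.log m := by
        have hlog : Tendsto (fun m : ℕ => Real.log m) atTop atTop :=
          Real.tendsto_log_atTop.comp tendsto_natCast_atTop_atTop
        filter_upwards [eventually_gt_atTop M, eventually_ge_atTop 3,
          hlog.eventually_ge_atTop ((M:ℝ) * ((k:ℝ)+2))] with m h1 h2 h3
        refine ⟨h1, h2, ?_⟩
        rw [one_div, inv_mul_eq_div, le_div_iff₀ (by positivity)]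
        linarith
      obtain ⟨m, hm1, hm2, hm3, hm4⟩ := ((hfreq _ hε).and_eventually hev).exists
      refine ⟨m, hm2, hm3, hm4, ?_⟩
      have hlogpos : (0:ℝ) < Real.log m := by
        apply Real.log_pos
        exact_mod_cast lt_of_lt_of_le (by norm_num) hm3
      rw [hu] at hm1
      rw [div_lt_iff₀ hlogpos] at hm1
      exact hm1.le
    choose g hg1 hg2 hg3 hg4 using key
    set n : ℕ → ℕ := fun k => Nat.rec 3 (fun k nk => g k nk) k with hn
    have hn0 : n 0 = 3 := rfl
    have hnsucc : ∀ k, n (k+1) = g k (n k) := fun k => rfl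
    have hmono : StrictMono n :=
      strictMono_nat_of_lt_succ (fun k => by rw [hnsucc]; exact hg1 k (n k))
    have hn3 : ∀ k, 3 ≤ n k := by
      intro k; induction k with
      | zero => exact le_refl 3
      | succ k ih => exact le_trans ih (hmono (Nat.lt_succ_self k)).le
    have huniq : ∀ k k' s, n k < s → s ≤ n (k+1) → n k' < s → s ≤ n (k'+1) → k = k' := by
      intro k k' s h1 h2 h3 h4
      by_contra hne
      rcases Nat.lt_or_ge k k' with h | h
      · have : n (k+1) ≤ n k' := hmono.le_iff_le.2 h
        omega
      · rcases Nat.lt_or_ge k' k with h' | h'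
        · have : n (k'+1) ≤ n k := hmono.le_iff_le.2 h'
          omega
        · omega
    set ℓ' : ℕ → ℝ := fun s =>
      if h : ∃ k, n k < s ∧ s ≤ n (k+1) then ℓ (n (h.choose + 1)) else 0 with hℓ'def
    have hℓ'eq : ∀ k s, n k < s → s ≤ n (k + 1) → ℓ' s = ℓ (n (k + 1)) := by
      intro k s h1 h2
      have h : ∃ k, n k < s ∧ s ≤ n (k+1) := ⟨k, h1, h2⟩
      have hk : h.choose = k := huniq h.choose k s h.choose_spec.1 h.choose_spec.2 h1 h2
      rw [hℓ'def]
      simp only [dif_pos h, hk]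
    refine ⟨n, hmono, ℓ', hℓ'eq, ?_⟩
    have hℓ'nonneg : ∀ s, 0 ≤ ℓ' s := by
      intro s
      by_cases hi : ∃ k, n k < s ∧ s ≤ n (k+1)
      · simp only [hℓ'def, dif_pos hi]; exact (hℓ _).1.le
      · simp only [hℓ'def, dif_neg hi]; exact le_refl 0
    have hℓ'le1 : ∀ s, ℓ' s ≤ 1 := by
      intro s
      by_cases hi : ∃ k, n k < s ∧ s ≤ n (k+1)
      · simp only [hℓ'def, dif_pos hi]; exact (hℓ _).2.le
      · simp only [hℓ'def, dif_neg hi]; norm_num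
    set S : ℕ → ℝ := fun N => ∑ s ∈ Finset.Icc 1 N, ℓ' s with hS
    have hSIoc : ∀ N, S N = ∑ s ∈ Finset.Ioc 0 N, ℓ' s := by
      intro N
      rw [hS]
      congr 1
    have hSle : ∀ N, S N ≤ N := by
      intro N
      calc S N ≤ ∑ s ∈ Finset.Icc 1 N, (1:ℝ) := Finset.sum_le_sum (fun s _ => hℓ'le1 s)
        _ = N := by rw [Finset.sum_const, Nat.card_Icc]; simp
    have hSnonneg : ∀ N, 0 ≤ S N := fun N => Finset.sum_nonneg (fun s _ => hℓ'nonneg s)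
    have hS0 : S (n 0) = 0 := by
      rw [hS]
      apply Finset.sum_eq_zero
      intro s hs
      simp only [Finset.mem_Icc, hn0] at hs
      have hi : ¬ ∃ k, n k < s ∧ s ≤ n (k+1) := by
        rintro ⟨k, hk1, hk2⟩
        have := hn3 k
        omega
      simp only [hℓ'def, dif_neg hi]
    -- block sum formula
    have hblock : ∀ k N, n k ≤ N → N ≤ n (k+1) →
        S N = S (n k) + ((N:ℝ) - (n k : ℝ)) * ℓ (n (k+1)) := by
      intro k N h1 h2
      rw [hSIoc, hSIoc]
      rw [← Finset.sum_Ioc_consecutive _ (Nat.zero_le (n k)) h1]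
      congr 1
      have : ∀ s ∈ Finset.Ioc (n k) N, ℓ' s = ℓ (n (k+1)) := by
        intro s hs
        simp only [Finset.mem_Ioc] at hs
        exact hℓ'eq k s hs.1 (le_trans hs.2 h2)
      rw [Finset.sum_congr rfl this, Finset.sum_const, Nat.card_Ioc, nsmul_eq_mul,
        Nat.cast_sub h1]
    -- claim : S (n k) ≤ (δ + 2/(k+1)) log (n k)
    have hclaim : ∀ k : ℕ, S (n k) ≤ (δ + 2/((k:ℝ)+1)) * Real.log (n k) := by
      intro k
      match k with
      | 0 =>
        rw [hS0, hn0]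
        have : (0:ℝ) < Real.log 3 := Real.log_pos (by norm_num)
        have h3 : ((3:ℕ):ℝ) = (3:ℝ) := by norm_num
        rw [h3]
        positivity
      | (k+1) =>
        have hb := hblock k (n (k+1)) (hmono (Nat.lt_succ_self k)).le (le_refl _)
        rw [hb]
        have h1 : S (n k) ≤ (n k : ℝ) := hSle (n k)
        have h2 : (n k : ℝ) ≤ (1/((k:ℝ)+2)) * Real.log (n (k+1)) := by
          have := hg3 k (n k)
          rw [← hnsucc k] at this
          exact this
        have h3 : ((n (k+1)):ℝ) * ℓ (n (k+1)) ≤ (δ + 1/((k:ℝ)+2)) * Real.log (n (k+1)) := by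
          have := hg4 k (n k)
          rw [← hnsucc k] at this
          exact this
        have h4 : ((n (k+1):ℝ) - (n k : ℝ)) * ℓ (n (k+1)) ≤ ((n (k+1)):ℝ) * ℓ (n (k+1)) := by
          apply mul_le_mul_of_nonneg_right _ (hℓ _).1.le
          have : (0:ℝ) ≤ (n k : ℝ) := by positivity
          linarith
        have hcast : ((k:ℝ)+1+1) = (k:ℝ)+2 := by ring
        push_cast
        rw [hcast]
        have hlog : (0:ℝ) ≤ Real.log (n (k+1)) := by
          apply Real.log_nonneg
          have := hn3 (k+1)
          exact_mod_cast le_trans (by norm_num) this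
        calc S (n k) + ((n (k+1):ℝ) - (n k : ℝ)) * ℓ (n (k+1))
            ≤ (1/((k:ℝ)+2)) * Real.log (n (k+1)) + (δ + 1/((k:ℝ)+2)) * Real.log (n (k+1)) := by
              have := le_trans h1 h2
              linarith [le_trans h4 h3]
          _ = (δ + 2/((k:ℝ)+2)) * Real.log (n (k+1)) := by ring
    -- block bound via concavity
    have hbb : ∀ k N, n k ≤ N → N ≤ n (k+1) →
        S N ≤ (δ + 2/((k:ℝ)+1)) * Real.log N := by
      intro k N h1 h2
      rw [hblock k N h1 h2]
      have hank : (0:ℝ) < (n k : ℝ) := by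
        have := hn3 k; positivity
      apply concave_aux (δ + 2/((k:ℝ)+1)) (S (n k)) (ℓ (n (k+1))) (n k) (n (k+1)) (N:ℝ) hank
        (by exact_mod_cast hmono (Nat.lt_succ_self k)) (by exact_mod_cast h1)
        (by exact_mod_cast h2) (by positivity) (hclaim k)
      -- endpoint b
      have hb := hblock k (n (k+1)) (hmono (Nat.lt_succ_self k)).le (le_refl _)
      rw [← hb]
      refine le_trans (hclaim (k+1)) ?_
      have hlog : (0:ℝ) ≤ Real.log (n (k+1)) := by
        apply Real.log_nonneg
        have := hn3 (k+1)
        exact_mod_cast le_trans (by norm_num) this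
      apply mul_le_mul_of_nonneg_right _ hlog
      push_cast
      have hle : 2/((k:ℝ)+1+1) ≤ 2/((k:ℝ)+1) := by
        apply div_le_div_of_nonneg_left (by norm_num) (by positivity) (by linarith)
      linarith
    -- eventual bound
    have hev : ∀ j : ℕ, ∀ᶠ N : ℕ in atTop, S N / Real.log N ≤ δ + 2/((j:ℝ)+1) := by
      intro j
      filter_upwards [eventually_gt_atTop (n j)] with N hN
      have hex : ∃ m, N ≤ n m := ⟨N, hmono.le_apply⟩
      have hfind0 : Nat.find hex ≠ 0 := by
        intro h0
        have h1 := Nat.find_spec hex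
        rw [h0, hn0] at h1
        have := hn3 j
        omega
      obtain ⟨k, hmk⟩ : ∃ k, Nat.find hex = k + 1 := ⟨Nat.find hex - 1, by omega⟩
      have hmspec : N ≤ n (k + 1) := hmk ▸ Nat.find_spec hex
      have hkN : n k < N := by
        by_contra hc
        push_neg at hc
        exact Nat.find_min hex (by rw [hmk]; omega : k < Nat.find hex) hc
      have hkj : j ≤ k := by
        by_contra hc
        push_neg at hc
        have : n (k+1) ≤ n j := hmono.monotone (show k+1 ≤ j by omega)
        omega
      have hbN := hbb k N hkN.le hmspec
      have hlogpos : (0:ℝ) < Real.log N := by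
        apply Real.log_pos
        have h3 : 3 < N := lt_of_le_of_lt (hn3 j) hN
        exact_mod_cast (by omega : 1 < N)
      rw [div_le_iff₀ hlogpos]
      refine le_trans hbN ?_
      apply mul_le_mul_of_nonneg_right _ hlogpos.le
      have : ((j:ℝ)+1) ≤ (k:ℝ)+1 := by
        have : (j:ℝ) ≤ (k:ℝ) := by exact_mod_cast hkj
        linarith
      have h2 : 2/((k:ℝ)+1) ≤ 2/((j:ℝ)+1) := by
        apply div_le_div_of_nonneg_left (by norm_num) (by positivity) this
      linarith
    -- conclude
    have hcb2 : IsCoboundedUnder (· ≤ ·) atTop (fun N : ℕ => S N / Real.log N) := by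
      apply isCoboundedUnder_le_of_eventually_le atTop (x := 0)
      filter_upwards [eventually_ge_atTop 1] with N hN
      apply div_nonneg (hSnonneg N)
      apply Real.log_natCast_nonneg
    apply le_of_forall_pos_le_add
    intro ε hε
    obtain ⟨j, hj⟩ := exists_nat_gt (2/ε)
    have hj2 : 2/((j:ℝ)+1) < ε := by
      rw [div_lt_iff₀ (by positivity)]
      rw [div_lt_iff₀ hε] at hj
      nlinarith
    calc limsup (fun N : ℕ => S N / Real.log N) atTop ≤ δ + 2/((j:ℝ)+1) :=
          limsup_le_of_le hcb2 (hev j)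
      _ ≤ δ + ε := by linarith
end
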